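/- arXiv:1205.1111 — 3 statements merged into one kernel-verified Lean document; each statement's English description precedes it below -/
import Mathlib

section
/- Let G be a group and let B0, B1, B2, C, d1, d2, φ be elements of G satisfying: (i) d1 * d2 = (B0 * B1 * B2 * C)^2; (ii) d1 commutes with B1; (iii) φ * d1 * φ⁻¹ = B1 and φ * B2 * φ⁻¹ = d2. Then B0' * C * B0 * B1 * B2 * C = [B2⁻¹ * d1, φ], where B0' = B2⁻¹ * B1⁻¹ * B0 * B1 * B2 and [x, y] = x * y * x⁻¹ * y⁻¹. -/
theorem stmt_3 {G : Type*} [Group G] (B0 B1 B2 C d1 d2 φ : G)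
    (hrel : d1 * d2 = (B0 * B1 * B2 * C) ^ 2)
    (hcomm : d1 * B1 = B1 * d1)
    (h1 : φ * d1 * φ⁻¹ = B1) (h2 : φ * B2 * φ⁻¹ = d2) :
    (B2⁻¹ * B1⁻¹ * B0 * B1 * B2) * C * B0 * B1 * B2 * C =
      (B2⁻¹ * d1) * φ * (B2⁻¹ * d1)⁻¹ * φ⁻¹ := by
  have h1' : φ * d1⁻¹ * φ⁻¹ = B1⁻¹ := by rw [← h1]; group
  have hc : Commute d1 B1 := hcomm
  have hcomm' : d1 * B1⁻¹ = B1⁻¹ * d1 := hc.inv_right.eq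
  have hRHS : (B2⁻¹ * d1) * φ * (B2⁻¹ * d1)⁻¹ * φ⁻¹ = B2⁻¹ * d1 * B1⁻¹ * d2 := by
    rw [← h1', ← h2]; group
  have hswap : B2⁻¹ * d1 * B1⁻¹ * d2 = B2⁻¹ * B1⁻¹ * (d1 * d2) := by
    rw [mul_assoc B2⁻¹ d1, hcomm']; group
  rw [hRHS, hswap, hrel, sq]; group
end

section
/- Let G be a group and let B0, B1, B2, C, d1, d2, φ be elements of G satisfying: (i) d1 * d2 = (B0 * B1 * B2 * C)^2; (ii) d1 commutes with B1; (iii) φ * d1 * φ⁻¹ = B1 and φ * B2 * φ⁻¹ = d2. Then the element (B2⁻¹ * B1⁻¹ * B0 * B1 * B2) * C * B0 * B1 * B2 * C lies in the commutator subgroup of G; in fact there exist u, v ∈ G with (B2⁻¹ * B1⁻¹ * B0 * B1 * B2) * C * B0 * B1 * B2 * C = u * v * u⁻¹ * v⁻¹. -/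
theorem stmt_4 {G : Type*} [Group G] (B0 B1 B2 C d1 d2 φ : G)
    (hrel : d1 * d2 = (B0 * B1 * B2 * C) ^ 2)
    (hcomm : d1 * B1 = B1 * d1)
    (h1 : φ * d1 * φ⁻¹ = B1) (h2 : φ * B2 * φ⁻¹ = d2) :
    (B2⁻¹ * B1⁻¹ * B0 * B1 * B2) * C * B0 * B1 * B2 * C ∈
      commutator G ∧
    ∃ u v : G,
      (B2⁻¹ * B1⁻¹ * B0 * B1 * B2) * C * B0 * B1 * B2 * C =
        u * v * u⁻¹ * v⁻¹ := by
  have hcm : Commute d1 B1 := hcomm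
  have hc : d1 * B1⁻¹ = B1⁻¹ * d1 := hcm.inv_right
  have key : (B2⁻¹ * B1⁻¹ * B0 * B1 * B2) * C * B0 * B1 * B2 * C =
      (B2⁻¹ * d1) * φ * (B2⁻¹ * d1)⁻¹ * φ⁻¹ := by
    have h3 : (B2⁻¹ * B1⁻¹ * B0 * B1 * B2) * C * B0 * B1 * B2 * C =
        B2⁻¹ * B1⁻¹ * (d1 * d2) := by
      rw [hrel, sq]; group
    have h4 : B2⁻¹ * B1⁻¹ * (d1 * d2) = B2⁻¹ * (d1 * B1⁻¹) * d2 := by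
      rw [hc]; group
    rw [h3, h4, ← h1, ← h2]; group
  refine ⟨?_, B2⁻¹ * d1, φ, key⟩
  rw [key]
  exact Subgroup.commutator_mem_commutator (Subgroup.mem_top _) (Subgroup.mem_top _)
end

section
/- Let G be a group and let a1, a2, a3, a4, a5, a6, b, s3, s4, s5, s6, d1, d2, d3, d4, d5, d6, d7, φ be elements of G satisfying: (i) d1 * d2 * d3 * d4 * d5 * d6 * d7 = a3 * a4 * a1 * b * s5 * a2 * (a5 * b * a5⁻¹) * s3 * s6 * a6 * (a3 * b * a3⁻¹) * s4; (ii) each of d1, ..., d7 is central in G; (iii) the elements a1, a2, a3, a4, a6, s5, s6 pairwise commute; (iv) φ * a3 * φ⁻¹ = d2, φ * d5 * φ⁻¹ = s5, φ * a2 * φ⁻¹ = d3, φ * d4 * φ⁻¹ = s6, φ * a1 * φ⁻¹ = d6, φ * d1 * φ⁻¹ = a4, and φ * a6 * φ⁻¹ = d7. Then b' * b5' * s3' * (a3 * b * a3⁻¹) * s4 = [a6⁻¹ * d1 * a1⁻¹ * d4 * a2⁻¹ * d5 * a3⁻¹, φ], where b' = (s5 * a2 * s6 * a6)⁻¹ *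 b * (s5 * a2 * s6 * a6), b5' = (s6 * a6)⁻¹ * (a5 * b * a5⁻¹) * (s6 * a6), s3' = (s6 * a6)⁻¹ * s3 * (s6 * a6), and [x, y] = x * y * x⁻¹ * y⁻¹. -/
private lemma sw2' {G : Type*} [Group G] {x y : G} (h : x * y = y * x) (z : G) :
    x * (y * z) = y * (x * z) := by rw [← mul_assoc, h, mul_assoc]

theorem stmt_8 {G : Type*} [Group G]
    (a1 a2 a3 a4 a5 a6 b s3 s4 s5 s6 d1 d2 d3 d4 d5 d6 d7 φ : G)
    (hrel : d1 * d2 * d3 * d4 * d5 * d6 * d7 =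
      a3 * a4 * a1 * b * s5 * a2 * (a5 * b * a5⁻¹) * s3 * s6 * a6 *
        (a3 * b * a3⁻¹) * s4)
    (hd1 : d1 ∈ Subgroup.center G) (hd2 : d2 ∈ Subgroup.center G)
    (hd3 : d3 ∈ Subgroup.center G) (hd4 : d4 ∈ Subgroup.center G)
    (hd5 : d5 ∈ Subgroup.center G) (hd6 : d6 ∈ Subgroup.center G)
    (hd7 : d7 ∈ Subgroup.center G)
    (hcomm : ∀ x ∈ ({a1, a2, a3, a4, a6, s5, s6} : Set G),
      ∀ y ∈ ({a1, a2, a3, a4, a6, s5, s6} : Set G), Commute x y)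
    (h1 : φ * a3 * φ⁻¹ = d2) (h2 : φ * d5 * φ⁻¹ = s5)
    (h3 : φ * a2 * φ⁻¹ = d3) (h4 : φ * d4 * φ⁻¹ = s6)
    (h5 : φ * a1 * φ⁻¹ = d6) (h6 : φ * d1 * φ⁻¹ = a4)
    (h7 : φ * a6 * φ⁻¹ = d7) :
    ((s5 * a2 * s6 * a6)⁻¹ * b * (s5 * a2 * s6 * a6)) *
        ((s6 * a6)⁻¹ * (a5 * b * a5⁻¹) * (s6 * a6)) *
        ((s6 * a6)⁻¹ * s3 * (s6 * a6)) *
        (a3 * b * a3⁻¹) * s4 =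
      (a6⁻¹ * d1 * a1⁻¹ * d4 * a2⁻¹ * d5 * a3⁻¹) * φ *
        (a6⁻¹ * d1 * a1⁻¹ * d4 * a2⁻¹ * d5 * a3⁻¹)⁻¹ * φ⁻¹ := by
  have hU : ((s5 * a2 * s6 * a6)⁻¹ * b * (s5 * a2 * s6 * a6)) *
        ((s6 * a6)⁻¹ * (a5 * b * a5⁻¹) * (s6 * a6)) *
        ((s6 * a6)⁻¹ * s3 * (s6 * a6)) *
        (a3 * b * a3⁻¹) * s4 =
      (a6⁻¹ * s6⁻¹ * a2⁻¹ * s5⁻¹ * a1⁻¹ * a4⁻¹ * a3⁻¹) *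
        (a3 * a4 * a1 * b * s5 * a2 * (a5 * b * a5⁻¹) * s3 * s6 * a6 *
          (a3 * b * a3⁻¹) * s4) := by group
  rw [hU, ← hrel]
  have hφc : φ * (a6⁻¹ * d1 * a1⁻¹ * d4 * a2⁻¹ * d5 * a3⁻¹)⁻¹ * φ⁻¹ =
      d2 * s5⁻¹ * d3 * s6⁻¹ * d6 * a4⁻¹ * d7 := by
    rw [← h1, ← h2, ← h3, ← h4, ← h5, ← h6, ← h7]; group
  have hR : (a6⁻¹ * d1 * a1⁻¹ * d4 * a2⁻¹ * d5 * a3⁻¹) * φ *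
        (a6⁻¹ * d1 * a1⁻¹ * d4 * a2⁻¹ * d5 * a3⁻¹)⁻¹ * φ⁻¹ =
      (a6⁻¹ * d1 * a1⁻¹ * d4 * a2⁻¹ * d5 * a3⁻¹) *
        (d2 * s5⁻¹ * d3 * s6⁻¹ * d6 * a4⁻¹ * d7) := by
    rw [← hφc]; group
  rw [hR]
  have m_a1 : a1 ∈ ({a1, a2, a3, a4, a6, s5, s6} : Set G) := by simp
  have m_a2 : a2 ∈ ({a1, a2, a3, a4, a6, s5, s6} : Set G) := by simp
  have m_a3 : a3 ∈ ({a1, a2, a3, a4, a6, s5, s6} : Set G) := by simp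
  have m_a4 : a4 ∈ ({a1, a2, a3, a4, a6, s5, s6} : Set G) := by simp
  have m_a6 : a6 ∈ ({a1, a2, a3, a4, a6, s5, s6} : Set G) := by simp
  have m_s5 : s5 ∈ ({a1, a2, a3, a4, a6, s5, s6} : Set G) := by simp
  have m_s6 : s6 ∈ ({a1, a2, a3, a4, a6, s5, s6} : Set G) := by simp
  have p_1_0 : a2⁻¹ * a1⁻¹ = a1⁻¹ * a2⁻¹ := ((hcomm a2 m_a2 a1 m_a1).inv_left.inv_right).eq
  have p_2_0 : a3⁻¹ * a1⁻¹ = a1⁻¹ * a3⁻¹ := ((hcomm a3 m_a3 a1 m_a1).inv_left.inv_right).eq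
  have p_2_1 : a3⁻¹ * a2⁻¹ = a2⁻¹ * a3⁻¹ := ((hcomm a3 m_a3 a2 m_a2).inv_left.inv_right).eq
  have p_3_0 : a4⁻¹ * a1⁻¹ = a1⁻¹ * a4⁻¹ := ((hcomm a4 m_a4 a1 m_a1).inv_left.inv_right).eq
  have p_3_1 : a4⁻¹ * a2⁻¹ = a2⁻¹ * a4⁻¹ := ((hcomm a4 m_a4 a2 m_a2).inv_left.inv_right).eq
  have p_3_2 : a4⁻¹ * a3⁻¹ = a3⁻¹ * a4⁻¹ := ((hcomm a4 m_a4 a3 m_a3).inv_left.inv_right).eq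
  have p_4_0 : a6⁻¹ * a1⁻¹ = a1⁻¹ * a6⁻¹ := ((hcomm a6 m_a6 a1 m_a1).inv_left.inv_right).eq
  have p_4_1 : a6⁻¹ * a2⁻¹ = a2⁻¹ * a6⁻¹ := ((hcomm a6 m_a6 a2 m_a2).inv_left.inv_right).eq
  have p_4_2 : a6⁻¹ * a3⁻¹ = a3⁻¹ * a6⁻¹ := ((hcomm a6 m_a6 a3 m_a3).inv_left.inv_right).eq
  have p_4_3 : a6⁻¹ * a4⁻¹ = a4⁻¹ * a6⁻¹ := ((hcomm a6 m_a6 a4 m_a4).inv_left.inv_right).eq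
  have p_5_0 : s5⁻¹ * a1⁻¹ = a1⁻¹ * s5⁻¹ := ((hcomm s5 m_s5 a1 m_a1).inv_left.inv_right).eq
  have p_5_1 : s5⁻¹ * a2⁻¹ = a2⁻¹ * s5⁻¹ := ((hcomm s5 m_s5 a2 m_a2).inv_left.inv_right).eq
  have p_5_2 : s5⁻¹ * a3⁻¹ = a3⁻¹ * s5⁻¹ := ((hcomm s5 m_s5 a3 m_a3).inv_left.inv_right).eq
  have p_5_3 : s5⁻¹ * a4⁻¹ = a4⁻¹ * s5⁻¹ := ((hcomm s5 m_s5 a4 m_a4).inv_left.inv_right).eq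
  have p_5_4 : s5⁻¹ * a6⁻¹ = a6⁻¹ * s5⁻¹ := ((hcomm s5 m_s5 a6 m_a6).inv_left.inv_right).eq
  have p_6_0 : s6⁻¹ * a1⁻¹ = a1⁻¹ * s6⁻¹ := ((hcomm s6 m_s6 a1 m_a1).inv_left.inv_right).eq
  have p_6_1 : s6⁻¹ * a2⁻¹ = a2⁻¹ * s6⁻¹ := ((hcomm s6 m_s6 a2 m_a2).inv_left.inv_right).eq
  have p_6_2 : s6⁻¹ * a3⁻¹ = a3⁻¹ * s6⁻¹ := ((hcomm s6 m_s6 a3 m_a3).inv_left.inv_right).eq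
  have p_6_3 : s6⁻¹ * a4⁻¹ = a4⁻¹ * s6⁻¹ := ((hcomm s6 m_s6 a4 m_a4).inv_left.inv_right).eq
  have p_6_4 : s6⁻¹ * a6⁻¹ = a6⁻¹ * s6⁻¹ := ((hcomm s6 m_s6 a6 m_a6).inv_left.inv_right).eq
  have p_6_5 : s6⁻¹ * s5⁻¹ = s5⁻¹ * s6⁻¹ := ((hcomm s6 m_s6 s5 m_s5).inv_left.inv_right).eq
  have p_7_0 : d1 * a1⁻¹ = a1⁻¹ * d1 := (Subgroup.mem_center_iff.mp hd1 (a1⁻¹)).symm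
  have p_7_1 : d1 * a2⁻¹ = a2⁻¹ * d1 := (Subgroup.mem_center_iff.mp hd1 (a2⁻¹)).symm
  have p_7_2 : d1 * a3⁻¹ = a3⁻¹ * d1 := (Subgroup.mem_center_iff.mp hd1 (a3⁻¹)).symm
  have p_7_3 : d1 * a4⁻¹ = a4⁻¹ * d1 := (Subgroup.mem_center_iff.mp hd1 (a4⁻¹)).symm
  have p_7_4 : d1 * a6⁻¹ = a6⁻¹ * d1 := (Subgroup.mem_center_iff.mp hd1 (a6⁻¹)).symm
  have p_7_5 : d1 * s5⁻¹ = s5⁻¹ * d1 := (Subgroup.mem_center_iff.mp hd1 (s5⁻¹)).symm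
  have p_7_6 : d1 * s6⁻¹ = s6⁻¹ * d1 := (Subgroup.mem_center_iff.mp hd1 (s6⁻¹)).symm
  have p_8_0 : d2 * a1⁻¹ = a1⁻¹ * d2 := (Subgroup.mem_center_iff.mp hd2 (a1⁻¹)).symm
  have p_8_1 : d2 * a2⁻¹ = a2⁻¹ * d2 := (Subgroup.mem_center_iff.mp hd2 (a2⁻¹)).symm
  have p_8_2 : d2 * a3⁻¹ = a3⁻¹ * d2 := (Subgroup.mem_center_iff.mp hd2 (a3⁻¹)).symm
  have p_8_3 : d2 * a4⁻¹ = a4⁻¹ * d2 := (Subgroup.mem_center_iff.mp hd2 (a4⁻¹)).symm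
  have p_8_4 : d2 * a6⁻¹ = a6⁻¹ * d2 := (Subgroup.mem_center_iff.mp hd2 (a6⁻¹)).symm
  have p_8_5 : d2 * s5⁻¹ = s5⁻¹ * d2 := (Subgroup.mem_center_iff.mp hd2 (s5⁻¹)).symm
  have p_8_6 : d2 * s6⁻¹ = s6⁻¹ * d2 := (Subgroup.mem_center_iff.mp hd2 (s6⁻¹)).symm
  have p_8_7 : d2 * d1 = d1 * d2 := Subgroup.mem_center_iff.mp hd1 d2
  have p_9_0 : d3 * a1⁻¹ = a1⁻¹ * d3 := (Subgroup.mem_center_iff.mp hd3 (a1⁻¹)).symm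
  have p_9_1 : d3 * a2⁻¹ = a2⁻¹ * d3 := (Subgroup.mem_center_iff.mp hd3 (a2⁻¹)).symm
  have p_9_2 : d3 * a3⁻¹ = a3⁻¹ * d3 := (Subgroup.mem_center_iff.mp hd3 (a3⁻¹)).symm
  have p_9_3 : d3 * a4⁻¹ = a4⁻¹ * d3 := (Subgroup.mem_center_iff.mp hd3 (a4⁻¹)).symm
  have p_9_4 : d3 * a6⁻¹ = a6⁻¹ * d3 := (Subgroup.mem_center_iff.mp hd3 (a6⁻¹)).symm
  have p_9_5 : d3 * s5⁻¹ = s5⁻¹ * d3 := (Subgroup.mem_center_iff.mp hd3 (s5⁻¹)).symm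
  have p_9_6 : d3 * s6⁻¹ = s6⁻¹ * d3 := (Subgroup.mem_center_iff.mp hd3 (s6⁻¹)).symm
  have p_9_7 : d3 * d1 = d1 * d3 := Subgroup.mem_center_iff.mp hd1 d3
  have p_9_8 : d3 * d2 = d2 * d3 := Subgroup.mem_center_iff.mp hd2 d3
  have p_10_0 : d4 * a1⁻¹ = a1⁻¹ * d4 := (Subgroup.mem_center_iff.mp hd4 (a1⁻¹)).symm
  have p_10_1 : d4 * a2⁻¹ = a2⁻¹ * d4 := (Subgroup.mem_center_iff.mp hd4 (a2⁻¹)).symm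
  have p_10_2 : d4 * a3⁻¹ = a3⁻¹ * d4 := (Subgroup.mem_center_iff.mp hd4 (a3⁻¹)).symm
  have p_10_3 : d4 * a4⁻¹ = a4⁻¹ * d4 := (Subgroup.mem_center_iff.mp hd4 (a4⁻¹)).symm
  have p_10_4 : d4 * a6⁻¹ = a6⁻¹ * d4 := (Subgroup.mem_center_iff.mp hd4 (a6⁻¹)).symm
  have p_10_5 : d4 * s5⁻¹ = s5⁻¹ * d4 := (Subgroup.mem_center_iff.mp hd4 (s5⁻¹)).symm
  have p_10_6 : d4 * s6⁻¹ = s6⁻¹ * d4 := (Subgroup.mem_center_iff.mp hd4 (s6⁻¹)).symm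
  have p_10_7 : d4 * d1 = d1 * d4 := Subgroup.mem_center_iff.mp hd1 d4
  have p_10_8 : d4 * d2 = d2 * d4 := Subgroup.mem_center_iff.mp hd2 d4
  have p_10_9 : d4 * d3 = d3 * d4 := Subgroup.mem_center_iff.mp hd3 d4
  have p_11_0 : d5 * a1⁻¹ = a1⁻¹ * d5 := (Subgroup.mem_center_iff.mp hd5 (a1⁻¹)).symm
  have p_11_1 : d5 * a2⁻¹ = a2⁻¹ * d5 := (Subgroup.mem_center_iff.mp hd5 (a2⁻¹)).symm
  have p_11_2 : d5 * a3⁻¹ = a3⁻¹ * d5 := (Subgroup.mem_center_iff.mp hd5 (a3⁻¹)).symm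
  have p_11_3 : d5 * a4⁻¹ = a4⁻¹ * d5 := (Subgroup.mem_center_iff.mp hd5 (a4⁻¹)).symm
  have p_11_4 : d5 * a6⁻¹ = a6⁻¹ * d5 := (Subgroup.mem_center_iff.mp hd5 (a6⁻¹)).symm
  have p_11_5 : d5 * s5⁻¹ = s5⁻¹ * d5 := (Subgroup.mem_center_iff.mp hd5 (s5⁻¹)).symm
  have p_11_6 : d5 * s6⁻¹ = s6⁻¹ * d5 := (Subgroup.mem_center_iff.mp hd5 (s6⁻¹)).symm
  have p_11_7 : d5 * d1 = d1 * d5 := Subgroup.mem_center_iff.mp hd1 d5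
  have p_11_8 : d5 * d2 = d2 * d5 := Subgroup.mem_center_iff.mp hd2 d5
  have p_11_9 : d5 * d3 = d3 * d5 := Subgroup.mem_center_iff.mp hd3 d5
  have p_11_10 : d5 * d4 = d4 * d5 := Subgroup.mem_center_iff.mp hd4 d5
  have p_12_0 : d6 * a1⁻¹ = a1⁻¹ * d6 := (Subgroup.mem_center_iff.mp hd6 (a1⁻¹)).symm
  have p_12_1 : d6 * a2⁻¹ = a2⁻¹ * d6 := (Subgroup.mem_center_iff.mp hd6 (a2⁻¹)).symm
  have p_12_2 : d6 * a3⁻¹ = a3⁻¹ * d6 := (Subgroup.mem_center_iff.mp hd6 (a3⁻¹)).symm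
  have p_12_3 : d6 * a4⁻¹ = a4⁻¹ * d6 := (Subgroup.mem_center_iff.mp hd6 (a4⁻¹)).symm
  have p_12_4 : d6 * a6⁻¹ = a6⁻¹ * d6 := (Subgroup.mem_center_iff.mp hd6 (a6⁻¹)).symm
  have p_12_5 : d6 * s5⁻¹ = s5⁻¹ * d6 := (Subgroup.mem_center_iff.mp hd6 (s5⁻¹)).symm
  have p_12_6 : d6 * s6⁻¹ = s6⁻¹ * d6 := (Subgroup.mem_center_iff.mp hd6 (s6⁻¹)).symm
  have p_12_7 : d6 * d1 = d1 * d6 := Subgroup.mem_center_iff.mp hd1 d6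
  have p_12_8 : d6 * d2 = d2 * d6 := Subgroup.mem_center_iff.mp hd2 d6
  have p_12_9 : d6 * d3 = d3 * d6 := Subgroup.mem_center_iff.mp hd3 d6
  have p_12_10 : d6 * d4 = d4 * d6 := Subgroup.mem_center_iff.mp hd4 d6
  have p_12_11 : d6 * d5 = d5 * d6 := Subgroup.mem_center_iff.mp hd5 d6
  have p_13_0 : d7 * a1⁻¹ = a1⁻¹ * d7 := (Subgroup.mem_center_iff.mp hd7 (a1⁻¹)).symm
  have p_13_1 : d7 * a2⁻¹ = a2⁻¹ * d7 := (Subgroup.mem_center_iff.mp hd7 (a2⁻¹)).symm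
  have p_13_2 : d7 * a3⁻¹ = a3⁻¹ * d7 := (Subgroup.mem_center_iff.mp hd7 (a3⁻¹)).symm
  have p_13_3 : d7 * a4⁻¹ = a4⁻¹ * d7 := (Subgroup.mem_center_iff.mp hd7 (a4⁻¹)).symm
  have p_13_4 : d7 * a6⁻¹ = a6⁻¹ * d7 := (Subgroup.mem_center_iff.mp hd7 (a6⁻¹)).symm
  have p_13_5 : d7 * s5⁻¹ = s5⁻¹ * d7 := (Subgroup.mem_center_iff.mp hd7 (s5⁻¹)).symm
  have p_13_6 : d7 * s6⁻¹ = s6⁻¹ * d7 := (Subgroup.mem_center_iff.mp hd7 (s6⁻¹)).symm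
  have p_13_7 : d7 * d1 = d1 * d7 := Subgroup.mem_center_iff.mp hd1 d7
  have p_13_8 : d7 * d2 = d2 * d7 := Subgroup.mem_center_iff.mp hd2 d7
  have p_13_9 : d7 * d3 = d3 * d7 := Subgroup.mem_center_iff.mp hd3 d7
  have p_13_10 : d7 * d4 = d4 * d7 := Subgroup.mem_center_iff.mp hd4 d7
  have p_13_11 : d7 * d5 = d5 * d7 := Subgroup.mem_center_iff.mp hd5 d7
  have p_13_12 : d7 * d6 = d6 * d7 := Subgroup.mem_center_iff.mp hd6 d7
  simp only [mul_assoc]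
  simp only [p_1_0, p_2_0, p_2_1, p_3_0, p_3_1, p_3_2, p_4_0, p_4_1, p_4_2, p_4_3, p_5_0, p_5_1, p_5_2, p_5_3, p_5_4, p_6_0, p_6_1, p_6_2, p_6_3, p_6_4, p_6_5, p_7_0, p_7_1, p_7_2, p_7_3, p_7_4, p_7_5, p_7_6, p_8_0, p_8_1, p_8_2, p_8_3, p_8_4, p_8_5, p_8_6, p_8_7, p_9_0, p_9_1, p_9_2, p_9_3, p_9_4, p_9_5, p_9_6, p_9_7, p_9_8, p_10_0, p_10_1, p_10_2, p_10_3, p_10_4, p_10_5, p_10_6, p_10_7, p_10_8, p_10_9, p_11_0, p_11_1, p_11_2, p_11_3, p_11_4, p_11_5, p_11_6, p_11_7, p_11_8, p_11_9, p_11_10, p_12_0, p_12_1, p_12_2, p_12_3, p_12_4, p_12_5, p_12_6, p_12_7, p_12_8, p_12_9, p_12_10, p_12_11, p_13_0, p_13_1, p_13_2, p_13_3, p_13_4, p_13_5, p_13_6, p_13_7, p_13_8, p_13_9, p_13_10, p_13_11, p_13_12, sw2' p_1_0, sw2' p_2_0, sw2' p_2_1, sw2' p_3_0, sw2' p_3_1,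 sw2' p_3_2, sw2' p_4_0, sw2' p_4_1, sw2' p_4_2, sw2' p_4_3, sw2' p_5_0, sw2' p_5_1, sw2' p_5_2, sw2' p_5_3, sw2' p_5_4, sw2' p_6_0, sw2' p_6_1, sw2' p_6_2, sw2' p_6_3, sw2' p_6_4, sw2' p_6_5, sw2' p_7_0, sw2' p_7_1, sw2' p_7_2, sw2' p_7_3, sw2' p_7_4, sw2' p_7_5, sw2' p_7_6, sw2' p_8_0, sw2' p_8_1, sw2' p_8_2, sw2' p_8_3, sw2' p_8_4, sw2' p_8_5, sw2' p_8_6, sw2' p_8_7, sw2' p_9_0, sw2' p_9_1, sw2' p_9_2, sw2' p_9_3, sw2' p_9_4, sw2' p_9_5, sw2' p_9_6, sw2' p_9_7, sw2' p_9_8, sw2' p_10_0, sw2' p_10_1, sw2' p_10_2, sw2' p_10_3, sw2' p_10_4, sw2' p_10_5, sw2' p_10_6, sw2' p_10_7, sw2' p_10_8, sw2' p_10_9, sw2' p_11_0, sw2' p_11_1, sw2' p_11_2, sw2' p_11_3, sw2' p_11_4, sw2' p_11_5, sw2' p_11_6, sw2' p_11_7, sw2' p_11_8, sw2' p_11_9,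 sw2' p_11_10, sw2' p_12_0, sw2' p_12_1, sw2' p_12_2, sw2' p_12_3, sw2' p_12_4, sw2' p_12_5, sw2' p_12_6, sw2' p_12_7, sw2' p_12_8, sw2' p_12_9, sw2' p_12_10, sw2' p_12_11, sw2' p_13_0, sw2' p_13_1, sw2' p_13_2, sw2' p_13_3, sw2' p_13_4, sw2' p_13_5, sw2' p_13_6, sw2' p_13_7, sw2' p_13_8, sw2' p_13_9, sw2' p_13_10, sw2' p_13_11, sw2' p_13_12]
end
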